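/- Let M > 0, 0 ≤ a < M, r₊ = M + √(M² − a²), r₋ = M − √(M² − a²), and define F(r) = −(r² − 2Mr + a²) + a² − 2a²r/r₊ + a²(r² + a²)²/(4M²r₊²). Then F(r₊) = 0 and F'(r₊) = −(r₊ − r₋) − 2a²/r₊ + 2a²/M = (1/(M(M + √(M²−a²)))) · ( −2M(M² − a²) − 2√(M²−a²)(M² − a²) ) < 0. In particular, there exists ε₀ > 0 such that F(r) < 0 for r ∈ (r₊, r₊ + ε₀). -/

import Mathlib

/-- The function F controlling the norm of the horizon generator K = T + (a/(2Mr₊))Φ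
vanishes at r₊, has the stated strictly negative derivative there, and hence is
negative just outside the horizon. -/
theorem stmt_10 (M a : ℝ) (hM : 0 < M) (ha : 0 ≤ a) (haM : a < M)
    (rp rm : ℝ) (hrp : rp = M + Real.sqrt (M ^ 2 - a ^ 2))
    (hrm : rm = M - Real.sqrt (M ^ 2 - a ^ 2))
    (F : ℝ → ℝ)
    (hF : ∀ r, F r = -(r ^ 2 - 2 * M * r + a ^ 2) + a ^ 2 - 2 * a ^ 2 * r / rp
        + a ^ 2 * (r ^ 2 + a ^ 2) ^ 2 / (4 * M ^ 2 * rp ^ 2)) :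
    F rp = 0
    ∧ HasDerivAt F (-(rp - rm) - 2 * a ^ 2 / rp + 2 * a ^ 2 / M) rp
    ∧ -(rp - rm) - 2 * a ^ 2 / rp + 2 * a ^ 2 / M
        = (1 / (M * (M + Real.sqrt (M ^ 2 - a ^ 2))))
          * (-2 * M * (M ^ 2 - a ^ 2) - 2 * Real.sqrt (M ^ 2 - a ^ 2) * (M ^ 2 - a ^ 2))
    ∧ -(rp - rm) - 2 * a ^ 2 / rp + 2 * a ^ 2 / M < 0
    ∧ ∃ ε₀ > 0, ∀ r : ℝ, rp < r → r < rp + ε₀ → F r < 0 := by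
  set s := Real.sqrt (M ^ 2 - a ^ 2) with hs0
  have hMa : (0:ℝ) < M ^ 2 - a ^ 2 := by nlinarith
  have hsnn : 0 ≤ s := Real.sqrt_nonneg _
  have hspos : 0 < s := Real.sqrt_pos.mpr hMa
  have hs2 : s ^ 2 = M ^ 2 - a ^ 2 := Real.sq_sqrt hMa.le
  have ha2 : a ^ 2 = M ^ 2 - s ^ 2 := by linarith
  have hrp0 : 0 < rp := by rw [hrp]; linarith
  have hM0 : M ≠ 0 := ne_of_gt hM
  have hrpne : rp ≠ 0 := ne_of_gt hrp0
  have hroot : rp ^ 2 - 2 * M * rp + a ^ 2 = 0 := by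
    rw [hrp, ha2]; ring
  have h2 : rp ^ 2 + a ^ 2 = 2 * M * rp := by linarith
  have e1 : 2 * a ^ 2 * rp / rp = 2 * a ^ 2 := by field_simp
  have e2 : a ^ 2 * (2 * M * rp) ^ 2 / (4 * M ^ 2 * rp ^ 2) = a ^ 2 := by
    rw [div_eq_iff (by positivity)]; ring
  have hFz : F rp = 0 := by
    rw [hF, h2, e1, e2]; linarith
  have hD : HasDerivAt F (-(rp - rm) - 2 * a ^ 2 / rp + 2 * a ^ 2 / M) rp := by
    have hFe : F = fun r => -(r ^ 2 - 2 * M * r + a ^ 2) + a ^ 2 - 2 * a ^ 2 * r / rp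
        + a ^ 2 * (r ^ 2 + a ^ 2) ^ 2 / (4 * M ^ 2 * rp ^ 2) := funext hF
    rw [hFe]
    have hA : HasDerivAt (fun r : ℝ => r ^ 2 + a ^ 2) (2 * rp) rp := by
      simpa using (hasDerivAt_pow 2 rp).add_const (a ^ 2)
    have hB : HasDerivAt (fun r : ℝ => (r ^ 2 + a ^ 2) ^ 2) (2 * (rp ^ 2 + a ^ 2) * (2 * rp)) rp := by
      simpa [Pi.pow_def, mul_comm, mul_assoc, mul_left_comm] using hA.pow 2
    have h1 : HasDerivAt (fun r : ℝ => -(r ^ 2 - 2 * M * r + a ^ 2)) (-(2 * rp - 2 * M)) rp := by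
      have h' : HasDerivAt (fun r : ℝ => r ^ 2 - 2 * M * r + a ^ 2) (2 * rp - 2 * M) rp := by
        simpa using ((hasDerivAt_pow 2 rp).sub ((hasDerivAt_id rp).const_mul (2 * M))).add_const (a ^ 2)
      exact h'.neg
    have h3 : HasDerivAt (fun r : ℝ => 2 * a ^ 2 * r / rp) (2 * a ^ 2 / rp) rp := by
      have := ((hasDerivAt_id rp).const_mul (2 * a ^ 2)).div_const rp
      simpa [mul_comm, mul_div_assoc] using this
    have h4 : HasDerivAt (fun r : ℝ => a ^ 2 * (r ^ 2 + a ^ 2) ^ 2 / (4 * M ^ 2 * rp ^ 2))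
        (a ^ 2 * (2 * (rp ^ 2 + a ^ 2) * (2 * rp)) / (4 * M ^ 2 * rp ^ 2)) rp := by
      simpa [mul_div_assoc] using (hB.const_mul (a ^ 2)).div_const (4 * M ^ 2 * rp ^ 2)
    have hsum := ((h1.add_const (a ^ 2)).sub h3).add h4
    have e3 : a ^ 2 * (2 * (rp ^ 2 + a ^ 2) * (2 * rp)) / (4 * M ^ 2 * rp ^ 2) = 2 * a ^ 2 / M := by
      rw [h2]; field_simp; ring
    have e4 : rp - rm = 2 * rp - 2 * M := by rw [hrp, hrm]; ring
    convert hsum using 1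
    · rfl
    · rfl
    · rfl
    rw [e3, e4]
  have hEq : -(rp - rm) - 2 * a ^ 2 / rp + 2 * a ^ 2 / M
      = (1 / (M * (M + s))) * (-2 * M * (M ^ 2 - a ^ 2) - 2 * s * (M ^ 2 - a ^ 2)) := by
    have hMs : (0:ℝ) < M + s := by linarith
    rw [hrp, hrm, ← hs2, ha2]
    field_simp
    ring
  have hneg : -(rp - rm) - 2 * a ^ 2 / rp + 2 * a ^ 2 / M < 0 := by
    rw [hEq]
    apply mul_neg_of_pos_of_neg
    · positivity
    · nlinarith
  refine ⟨hFz, hD, hEq, hneg, ?_⟩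
  have hslope : Filter.Tendsto (slope F rp) (nhdsWithin rp {rp}ᶜ)
      (nhds (-(rp - rm) - 2 * a ^ 2 / rp + 2 * a ^ 2 / M)) :=
    hasDerivAt_iff_tendsto_slope.mp hD
  have hev : ∀ᶠ r in nhdsWithin rp {rp}ᶜ, slope F rp r < 0 :=
    hslope.eventually_lt_const hneg
  have hev' : ∀ᶠ r in nhdsWithin rp (Set.Ioi rp), slope F rp r < 0 :=
    hev.filter_mono (nhdsWithin_mono rp (fun x hx => ne_of_gt hx))
  rw [Filter.eventually_iff, mem_nhdsGT_iff_exists_Ioo_subset] at hev'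
  obtain ⟨u, hu, hsub⟩ := hev'
  refine ⟨u - rp, by simpa using hu, fun r hr1 hr2 => ?_⟩
  have hru : r < u := by linarith
  have hsl : slope F rp r < 0 := hsub ⟨hr1, hru⟩
  rw [slope_def_field] at hsl
  rw [hFz, sub_zero] at hsl
  have hpos : 0 < r - rp := sub_pos.mpr hr1
  have := mul_neg_of_neg_of_pos hsl hpos
  rwa [div_mul_cancel₀ _ hpos.ne'] at this
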